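/- Let R:(0,∞)→[0,∞) be eventually monotone and regularly varying at +∞ with index −α where α<1, let σ_n² = Σ_{k=1}^n R(k), and let ρ_n(t) = σ_n^{−2} Σ_{k=1}^n R(k) cos(2πkt/n). Then for every ε>0 there exists T=T(ε)>0 such that for every n∈ℕ and every real t∈[T, n/2], ρ_n(t) log t < ε. -/

import Mathlib

set_option maxHeartbeats 1000000


open Filter Real

/-- A function `f` is regularly varying at `+∞` with index `β` if for every `λ > 0`,
`f(λx)/f(x) → λ^β` as `x → +∞`. -/
def RegularlyVarying (f : ℝ → ℝ) (β : ℝ) : Prop :=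
  ∀ l : ℝ, 0 < l → Filter.Tendsto (fun x => f (l * x) / f x) Filter.atTop (nhds (l ^ β))

/-- A function is eventually monotone if it is monotone on some interval `(A, ∞)`. -/
def EventuallyMonotone (f : ℝ → ℝ) : Prop :=
  ∃ A : ℝ, MonotoneOn f (Set.Ioi A) ∨ AntitoneOn f (Set.Ioi A)


lemma sum_cos_bound (θ : ℝ) (hs : 0 < Real.sin (θ/2)) (j : ℕ) :
    |∑ k ∈ Finset.Icc 1 j, Real.cos (k * θ)| ≤ 1 / Real.sin (θ/2) := by
  set f : ℕ → ℝ := fun k => Real.sin (k*θ + θ/2) with hf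
  have key : (∑ k ∈ Finset.Icc 1 j, Real.cos (k * θ)) * (2 * Real.sin (θ/2))
      = f j - f 0 := by
    rw [← Finset.Ico_add_one_right_eq_Icc, Finset.sum_Ico_eq_sum_range, Finset.sum_mul]
    rw [← Finset.sum_range_sub f j]
    apply Finset.sum_congr rfl
    intro i _
    have : ((1+i:ℕ):ℝ) = (i:ℝ)+1 := by push_cast; ring
    rw [this, hf]
    simp only []
    push_cast
    have e2 : (i:ℝ)*θ + θ/2 = (((i:ℝ)+1)*θ) - θ/2 := by ring
    rw [e2, Real.sin_add, Real.sin_sub]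
    ring
  have h2 : |f j - f 0| ≤ 2 := by
    calc |f j - f 0| ≤ |f j| + |f 0| := abs_sub _ _
    _ ≤ 1 + 1 := by gcongr <;> exact Real.abs_sin_le_one _
    _ = 2 := by norm_num
  rw [le_div_iff₀ hs]
  have : |∑ k ∈ Finset.Icc 1 j, Real.cos (k * θ)| * (2 * Real.sin (θ/2)) ≤ 2 := by
    calc |∑ k ∈ Finset.Icc 1 j, Real.cos (k * θ)| * (2 * Real.sin (θ/2))
        = |(∑ k ∈ Finset.Icc 1 j, Real.cos (k * θ)) * (2 * Real.sin (θ/2))| := by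
          rw [abs_mul, abs_of_pos (by linarith : (0:ℝ) < 2 * Real.sin (θ/2))]
    _ = |f j - f 0| := by rw [key]
    _ ≤ 2 := h2
  nlinarith [abs_nonneg (∑ k ∈ Finset.Icc 1 j, Real.cos (k * θ))]

lemma abel_bound (f g : ℕ → ℝ) (N : ℕ) (B : ℝ)
    (hg : ∀ i ≤ N, |∑ j ∈ Finset.range i, g j| ≤ B) :
    |∑ i ∈ Finset.range N, f i * g i| ≤
      (|f (N-1)| + ∑ i ∈ Finset.range (N-1), |f (i+1) - f i|) * B := by
  have hbp := Finset.sum_range_by_parts f g N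
  simp only [smul_eq_mul] at hbp
  rw [hbp]
  have h1 : |f (N-1) * ∑ i ∈ Finset.range N, g i| ≤ |f (N-1)| * B := by
    rw [abs_mul]; exact mul_le_mul_of_nonneg_left (hg N le_rfl) (abs_nonneg _)
  have h2 : |∑ i ∈ Finset.range (N-1), (f (i+1) - f i) * ∑ j ∈ Finset.range (i+1), g j|
      ≤ ∑ i ∈ Finset.range (N-1), |f (i+1) - f i| * B := by
    refine (Finset.abs_sum_le_sum_abs _ _).trans (Finset.sum_le_sum fun i hi => ?_)
    rw [abs_mul]
    exact mul_le_mul_of_nonneg_left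
      (hg (i+1) (by have := Finset.mem_range.mp hi; omega)) (abs_nonneg _)
  calc |f (N-1) * ∑ i ∈ Finset.range N, g i -
        ∑ i ∈ Finset.range (N-1), (f (i+1) - f i) * ∑ j ∈ Finset.range (i+1), g j|
      ≤ |f (N-1) * ∑ i ∈ Finset.range N, g i| +
        |∑ i ∈ Finset.range (N-1), (f (i+1) - f i) * ∑ j ∈ Finset.range (i+1), g j| :=
        abs_sub _ _
    _ ≤ |f (N-1)| * B + ∑ i ∈ Finset.range (N-1), |f (i+1) - f i| * B := add_le_add h1 h2
    _ = _ := by rw [add_mul, Finset.sum_mul]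

lemma sum_rpow_le (β : ℝ) (hβ0 : 0 < β) (hβ1 : β < 1) (m : ℕ) (hm : 1 ≤ m) :
    ∑ k ∈ Finset.Icc 1 m, ((k:ℝ))^(-β) ≤ 1 + (m:ℝ)^(1-β)/(1-β) := by
  have hsplit : Finset.Icc 1 m = insert 1 (Finset.Icc 2 m) := by
    ext x; simp [Finset.mem_Icc, Finset.mem_insert]; omega
  rw [hsplit, Finset.sum_insert (by simp), Nat.cast_one, Real.one_rpow]
  gcongr 1 + ?_
  have hmono : AntitoneOn (fun x : ℝ => x ^ (-β)) (Set.Icc (1:ℝ) (1 + (m-1:ℕ))) := by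
    intro x hx y hy hxy
    exact Real.rpow_le_rpow_of_nonpos (lt_of_lt_of_le one_pos hx.1) hxy (by linarith)
  have hint := hmono.sum_le_integral
  have hcast : (1:ℝ) + ((m-1:ℕ):ℝ) = (m:ℝ) := by
    have : ((m-1:ℕ):ℝ) = (m:ℝ) - 1 := by
      push_cast [Nat.cast_sub hm]; ring
    rw [this]; ring
  rw [hcast] at hint
  have heq : ∑ k ∈ Finset.Icc 2 m, ((k:ℝ))^(-β)
      = ∑ i ∈ Finset.range (m-1), ((1:ℝ) + ((i+1:ℕ):ℝ))^(-β) := by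
    rw [← Finset.Ico_add_one_right_eq_Icc, Finset.sum_Ico_eq_sum_range]
    have : m + 1 - 2 = m - 1 := by omega
    rw [this]
    apply Finset.sum_congr rfl
    intro i _
    norm_num
    ring_nf
  rw [heq]
  have hival : ∫ x in (1:ℝ)..(m:ℝ), x ^ (-β) = ((m:ℝ)^(1-β) - 1)/(1-β) := by
    rw [integral_rpow (Or.inl (by linarith))]
    norm_num
    rw [show -β + 1 = 1 - β by ring]
  calc ∑ i ∈ Finset.range (m-1), ((1:ℝ) + ((i+1:ℕ):ℝ))^(-β)
      ≤ ∫ x in (1:ℝ)..(m:ℝ), x ^ (-β) := hint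
    _ = ((m:ℝ)^(1-β) - 1)/(1-β) := hival
    _ ≤ (m:ℝ)^(1-β)/(1-β) := by
        rw [sub_div]
        have h1b : (0:ℝ) < 1-β := by linarith
        have : 0 ≤ 1/(1-β) := by positivity
        linarith

lemma tail_anti (R : ℝ → ℝ) (θ B : ℝ) (M n : ℕ) (hMn : M < n)
    (hpos : ∀ k : ℕ, M+1 ≤ k → 0 ≤ R k)
    (hanti : ∀ k : ℕ, M+1 ≤ k → k < n → R (↑(k+1)) ≤ R k)
    (hD : ∀ j : ℕ, j ≤ n → |∑ k ∈ Finset.Icc (M+1) j, Real.cos (k*θ)| ≤ B) :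
    |∑ k ∈ Finset.Icc (M+1) n, R k * Real.cos (k*θ)| ≤ R (↑(M+1)) * B := by
  set N := n - M with hN
  have hN1 : 1 ≤ N := by omega
  set f : ℕ → ℝ := fun i => R ((M+1+i : ℕ)) with hf
  set g : ℕ → ℝ := fun i => Real.cos (((M+1+i:ℕ):ℝ)*θ) with hg'
  have hre : ∑ k ∈ Finset.Icc (M+1) n, R k * Real.cos (k*θ)
      = ∑ i ∈ Finset.range N, f i * g i := by
    rw [← Finset.Ico_add_one_right_eq_Icc, Finset.sum_Ico_eq_sum_range]
    have : n + 1 - (M+1) = N := by omega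
    rw [this]
  have hgB : ∀ i ≤ N, |∑ j ∈ Finset.range i, g j| ≤ B := by
    intro i hi
    have : ∑ j ∈ Finset.range i, g j = ∑ k ∈ Finset.Icc (M+1) (M+i), Real.cos (k*θ) := by
      rw [← Finset.Ico_add_one_right_eq_Icc, Finset.sum_Ico_eq_sum_range]
      have : M + i + 1 - (M+1) = i := by omega
      rw [this]
    rw [this]
    exact hD (M+i) (by omega)
  have key := abel_bound f g N B hgB
  rw [hre]
  have h1 : |f (N-1)| = f (N-1) := abs_of_nonneg (hpos _ (by omega))
  have h2 : ∑ i ∈ Finset.range (N-1), |f (i+1) - f i|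
      = ∑ i ∈ Finset.range (N-1), (f i - f (i+1)) := by
    apply Finset.sum_congr rfl
    intro i hi
    have hi' := Finset.mem_range.mp hi
    have : f (i+1) ≤ f i := by
      have := hanti (M+1+i) (by omega) (by omega)
      have e : M+1+i+1 = M+1+(i+1) := by omega
      rwa [e] at this
    rw [abs_of_nonpos (by linarith)]
    ring
  rw [h1, h2, Finset.sum_range_sub' f (N-1)] at key
  have e0 : f 0 = R (↑(M+1)) := by simp [hf]
  calc |∑ i ∈ Finset.range N, f i * g i| ≤ (f (N-1) + (f 0 - f (N-1))) * B := key
    _ = R (↑(M+1)) * B := by rw [← e0]; ring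

lemma tail_mono (R : ℝ → ℝ) (θ B : ℝ) (M n : ℕ) (hMn : M < n)
    (hpos : ∀ k : ℕ, M+1 ≤ k → 0 ≤ R k)
    (hmono : ∀ k : ℕ, M+1 ≤ k → k < n → R k ≤ R (↑(k+1)))
    (hD : ∀ j : ℕ, j ≤ n → |∑ k ∈ Finset.Icc (M+1) j, Real.cos (k*θ)| ≤ B) :
    |∑ k ∈ Finset.Icc (M+1) n, R k * Real.cos (k*θ)| ≤ 2 * R n * B := by
  set N := n - M with hN
  have hN1 : 1 ≤ N := by omega
  set f : ℕ → ℝ := fun i => R ((M+1+i : ℕ)) with hf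
  set g : ℕ → ℝ := fun i => Real.cos (((M+1+i:ℕ):ℝ)*θ) with hg'
  have hre : ∑ k ∈ Finset.Icc (M+1) n, R k * Real.cos (k*θ)
      = ∑ i ∈ Finset.range N, f i * g i := by
    rw [← Finset.Ico_add_one_right_eq_Icc, Finset.sum_Ico_eq_sum_range]
    have : n + 1 - (M+1) = N := by omega
    rw [this]
  have hgB : ∀ i ≤ N, |∑ j ∈ Finset.range i, g j| ≤ B := by
    intro i hi
    have : ∑ j ∈ Finset.range i, g j = ∑ k ∈ Finset.Icc (M+1) (M+i), Real.cos (k*θ) := by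
      rw [← Finset.Ico_add_one_right_eq_Icc, Finset.sum_Ico_eq_sum_range]
      have : M + i + 1 - (M+1) = i := by omega
      rw [this]
    rw [this]
    exact hD (M+i) (by omega)
  have key := abel_bound f g N B hgB
  rw [hre]
  have hB : 0 ≤ B := by
    have h := hD 0 (by omega)
    have he : Finset.Icc (M+1) 0 = ∅ := Finset.Icc_eq_empty (by omega)
    rw [he] at h; simpa using h
  have h1 : |f (N-1)| = f (N-1) := abs_of_nonneg (hpos _ (by omega))
  have h2 : ∑ i ∈ Finset.range (N-1), |f (i+1) - f i|
      = ∑ i ∈ Finset.range (N-1), (f (i+1) - f i) := by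
    apply Finset.sum_congr rfl
    intro i hi
    have hi' := Finset.mem_range.mp hi
    have : f i ≤ f (i+1) := by
      have := hmono (M+1+i) (by omega) (by omega)
      have e : M+1+i+1 = M+1+(i+1) := by omega
      rwa [e] at this
    rw [abs_of_nonneg (by linarith)]
  rw [h1, h2, Finset.sum_range_sub f (N-1)] at key
  have eN : f (N-1) = R n := by
    have : M+1+(N-1) = n := by omega
    simp only [hf, this]
  calc |∑ i ∈ Finset.range N, f i * g i| ≤ (f (N-1) + (f (N-1) - f 0)) * B := key
    _ ≤ (2 * R n) * B := by
        have h0 : 0 ≤ f 0 := hpos _ (by omega)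
        rw [eN] at key ⊢
        apply mul_le_mul_of_nonneg_right ?_ hB
        linarith
    _ = 2 * R n * B := by ring

lemma potter_anti (R : ℝ → ℝ) (A X β : ℝ) (hβ : 0 ≤ β)
    (hanti : AntitoneOn R (Set.Ioi A)) (hAX : A < X) (hX : 0 < X)
    (hdoub : ∀ x, X ≤ x → 2^(-β) * R x ≤ R (2*x))
    (hRnn : ∀ z, X ≤ z → 0 ≤ R z) :
    ∀ x y, X ≤ x → x ≤ y → (x/(2*y))^β * R x ≤ R y := by
  have hiter : ∀ (j : ℕ) (x : ℝ), X ≤ x → ((2:ℝ)^(-β))^j * R x ≤ R ((2:ℝ)^j * x) := by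
    intro j
    induction j with
    | zero => intro x hx; simp
    | succ j ih =>
      intro x hx
      have h2j : (1:ℝ) ≤ (2:ℝ)^j := one_le_pow₀ (by norm_num)
      have hx' : X ≤ (2:ℝ)^j * x := by nlinarith
      have := hdoub ((2:ℝ)^j * x) hx'
      have hih := ih x hx
      have hpow : (0:ℝ) < 2^(-β) := Real.rpow_pos_of_pos (by norm_num) _
      calc ((2:ℝ)^(-β))^(j+1) * R x = 2^(-β) * (((2:ℝ)^(-β))^j * R x) := by ring
        _ ≤ 2^(-β) * R ((2:ℝ)^j * x) := by
            apply mul_le_mul_of_nonneg_left hih (le_of_lt hpow)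
        _ ≤ R (2 * ((2:ℝ)^j * x)) := this
        _ = R ((2:ℝ)^(j+1) * x) := by ring_nf
  intro x y hx hxy
  have hx0 : 0 < x := lt_of_lt_of_le hX hx
  have hy0 : 0 < y := lt_of_lt_of_le hx0 hxy
  set j : ℕ := ⌈Real.logb 2 (y/x)⌉₊ with hj
  have hyx1 : 1 ≤ y/x := (one_le_div hx0).mpr hxy
  have hlogb : Real.logb 2 (y/x) ≤ j := Nat.le_ceil _
  have hjle : (j:ℝ) ≤ Real.logb 2 (y/x) + 1 := by
    have := Nat.ceil_lt_add_one (Real.logb_nonneg (by norm_num : (1:ℝ) < 2) hyx1)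
    linarith
  have h2j_ge : y/x ≤ (2:ℝ)^j := by
    calc y/x = (2:ℝ) ^ (Real.logb 2 (y/x)) := (Real.rpow_logb (by norm_num) (by norm_num) (by positivity)).symm
      _ ≤ (2:ℝ) ^ (j:ℝ) := Real.rpow_le_rpow_of_exponent_le (by norm_num) hlogb
      _ = (2:ℝ)^j := Real.rpow_natCast 2 j
  have h2j_le : ((2:ℝ)^j : ℝ) ≤ 2*(y/x) := by
    calc ((2:ℝ)^j : ℝ) = (2:ℝ) ^ (j:ℝ) := (Real.rpow_natCast 2 j).symm
      _ ≤ (2:ℝ) ^ (Real.logb 2 (y/x) + 1) := Real.rpow_le_rpow_of_exponent_le (by norm_num) hjle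
      _ = (2:ℝ) ^ (Real.logb 2 (y/x)) * 2 := by rw [Real.rpow_add (by norm_num), Real.rpow_one]
      _ = 2*(y/x) := by rw [Real.rpow_logb (by norm_num) (by norm_num) (by positivity)]; ring
  have hyle : y ≤ (2:ℝ)^j * x := by
    rw [div_le_iff₀ hx0] at h2j_ge; linarith
  have step1 : R ((2:ℝ)^j * x) ≤ R y := by
    apply hanti _ _ hyle
    · exact Set.mem_Ioi.mpr (lt_of_lt_of_le hAX (le_trans hx hxy))
    · exact Set.mem_Ioi.mpr (lt_of_lt_of_le hAX (le_trans hx (by nlinarith [one_le_pow₀ (by norm_num : (1:ℝ) ≤ 2) (n := j)])))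
  have step2 : (x/(2*y))^β * R x ≤ ((2:ℝ)^(-β))^j * R x := by
    have hRx : 0 ≤ R x := hRnn x hx
    have hpows : ((2:ℝ)^(-β))^j = ((2:ℝ)^j)^(-β) := by
      rw [← Real.rpow_natCast ((2:ℝ)^(-β)) j, ← Real.rpow_natCast (2:ℝ) j,
          ← Real.rpow_mul (by norm_num : (0:ℝ) ≤ 2), ← Real.rpow_mul (by norm_num : (0:ℝ) ≤ 2),
          mul_comm]
    have h1 : (x/(2*y))^β = (2*(y/x))^(-β) := by
      rw [Real.rpow_neg (by positivity), ← Real.inv_rpow (by positivity)]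
      congr 1
      field_simp
    have h2 : (2*(y/x))^(-β) ≤ ((2:ℝ)^j)^(-β) :=
      Real.rpow_le_rpow_of_nonpos (by positivity) h2j_le (neg_nonpos.mpr hβ)
    rw [hpows, h1]
    exact mul_le_mul_of_nonneg_right h2 hRx
  calc (x/(2*y))^β * R x ≤ ((2:ℝ)^(-β))^j * R x := step2
    _ ≤ R ((2:ℝ)^j * x) := hiter j x hx
    _ ≤ R y := step1

lemma glue (ρ : ℕ → ℝ → ℝ) (C γ K : ℝ) (hC : 0 ≤ C) (hγ0 : 0 < γ)
    (hK : 1 ≤ K) (ε : ℝ) (hε : 0 < ε)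
    (hbound : ∀ (n:ℕ) (t:ℝ), K ≤ t → t ≤ (n:ℝ)/2 → ρ n t ≤ C * t^(-γ)) :
    ∃ T : ℝ, 0 < T ∧ ∀ (n:ℕ) (t:ℝ), T ≤ t → t ≤ (n:ℝ)/2 → ρ n t * Real.log t < ε := by
  set M : ℝ := 2*C/γ + 1 with hM
  have hM0 : 0 < M := by positivity
  refine ⟨max (max K 2) ((M/ε + 1)^(2/γ)), by positivity, ?_⟩
  intro n t hT ht2
  have htK : K ≤ t := le_trans (le_trans (le_max_left _ _) (le_max_left _ _)) hT
  have ht2' : (2:ℝ) ≤ t := le_trans (le_trans (le_max_right _ _) (le_max_left _ _)) hT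
  have ht0 : 0 < t := by linarith
  have hlog : 0 < Real.log t := Real.log_pos (by linarith)
  have hrp : (0:ℝ) < t^(γ/2) := Real.rpow_pos_of_pos ht0 _
  have h1 : ρ n t * Real.log t ≤ C * t^(-γ) * Real.log t :=
    mul_le_mul_of_nonneg_right (hbound n t htK ht2) (le_of_lt hlog)
  have h2 : Real.log t ≤ t^(γ/2) / (γ/2) := Real.log_le_rpow_div (le_of_lt ht0) (by positivity)
  have h3 : C * t^(-γ) * Real.log t ≤ C * t^(-γ) * (t^(γ/2)/(γ/2)) := by
    apply mul_le_mul_of_nonneg_left h2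
    positivity
  have h4 : C * t^(-γ) * (t^(γ/2)/(γ/2)) = (2*C/γ) * t^(-(γ/2)) := by
    rw [show t^(-(γ/2)) = t^(-γ) * t^(γ/2) by rw [← Real.rpow_add ht0]; ring_nf]
    field_simp
  have h5 : (2*C/γ) * t^(-(γ/2)) < M * t^(-(γ/2)) := by
    have : (0:ℝ) < t^(-(γ/2)) := Real.rpow_pos_of_pos ht0 _
    have hlt : 2*C/γ < M := by rw [hM]; linarith
    exact mul_lt_mul_of_pos_right hlt this
  have h6 : M * t^(-(γ/2)) ≤ ε := by
    have hTb : (M/ε + 1)^(2/γ) ≤ t := le_trans (le_max_right _ _) hT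
    have hb0 : (0:ℝ) < M/ε + 1 := by positivity
    have hkey : M/ε + 1 ≤ t^(γ/2) := by
      calc M/ε + 1 = ((M/ε + 1)^(2/γ))^(γ/2) := by
            rw [← Real.rpow_mul (le_of_lt hb0), show (2/γ)*(γ/2) = 1 by field_simp,
              Real.rpow_one]
        _ ≤ t^(γ/2) := Real.rpow_le_rpow (by positivity) hTb (by positivity)
    have : M * t^(-(γ/2)) = M / t^(γ/2) := by
      rw [Real.rpow_neg (le_of_lt ht0)]; ring
    rw [this]
    rw [div_le_iff₀ hrp]
    calc M = ε * (M/ε) := by field_simp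
      _ ≤ ε * t^(γ/2) := by
          apply mul_le_mul_of_nonneg_left ?_ (le_of_lt hε)
          linarith
  linarith

lemma partial_cos_bound (n : ℕ) (t : ℝ) (ht1 : 1 ≤ t) (ht2 : t ≤ (n:ℝ)/2) (M : ℕ) :
    ∀ j : ℕ, j ≤ n → |∑ k ∈ Finset.Icc (M+1) j, Real.cos (k*(2*π*t/n))| ≤ (n:ℝ)/t := by
  have hn0 : (0:ℝ) < n := by linarith
  set θ : ℝ := 2*π*t/n with hθ
  have hθ2 : θ/2 = π*t/n := by rw [hθ]; ring
  have hsin : 2*t/n ≤ Real.sin (θ/2) := by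
    rw [hθ2]
    have h1 : (0:ℝ) ≤ π*t/n := by positivity
    have h2 : π*t/n ≤ π/2 := by
      rw [div_le_div_iff₀ hn0 (by norm_num : (0:ℝ) < 2)]
      have := Real.pi_pos
      nlinarith
    have := Real.mul_le_sin h1 h2
    have hπ : (0:ℝ) < π := Real.pi_pos
    calc 2*t/n = 2/π * (π*t/n) := by field_simp
      _ ≤ Real.sin (π*t/n) := this
  have hs0 : 0 < Real.sin (θ/2) := lt_of_lt_of_le (by positivity) hsin
  have hD : ∀ j : ℕ, |∑ k ∈ Finset.Icc 1 j, Real.cos (k*θ)| ≤ (n:ℝ)/(2*t) := by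
    intro j
    calc |∑ k ∈ Finset.Icc 1 j, Real.cos (k*θ)| ≤ 1 / Real.sin (θ/2) :=
          sum_cos_bound θ hs0 j
      _ ≤ 1 / (2*t/n) := by
          apply one_div_le_one_div_of_le (by positivity) hsin
      _ = (n:ℝ)/(2*t) := by field_simp
  intro j hj
  rcases le_or_gt j M with hjM | hjM
  · have : Finset.Icc (M+1) j = ∅ := Finset.Icc_eq_empty (by omega)
    rw [this]
    simp
    positivity
  · have hsplit : ∑ k ∈ Finset.Icc 1 M, Real.cos (k*θ) + ∑ k ∈ Finset.Icc (M+1) j, Real.cos (k*θ)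
        = ∑ k ∈ Finset.Icc 1 j, Real.cos (k*θ) := by
      rw [show Finset.Icc 1 M = Finset.Ioc 0 M from by rw [← Finset.Icc_add_one_left_eq_Ioc, zero_add],
          show Finset.Icc (M+1) j = Finset.Ioc M j from by rw [← Finset.Icc_add_one_left_eq_Ioc],
          show Finset.Icc 1 j = Finset.Ioc 0 j from by rw [← Finset.Icc_add_one_left_eq_Ioc, zero_add]]
      exact Finset.sum_Ioc_consecutive _ (by omega) (by omega)
    have h1 := hD M
    have h2 := hD j
    have : |∑ k ∈ Finset.Icc (M+1) j, Real.cos (k*θ)|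
        ≤ |∑ k ∈ Finset.Icc 1 j, Real.cos (k*θ)| + |∑ k ∈ Finset.Icc 1 M, Real.cos (k*θ)| := by
      rw [show ∑ k ∈ Finset.Icc (M+1) j, Real.cos (k*θ)
          = ∑ k ∈ Finset.Icc 1 j, Real.cos (k*θ) - ∑ k ∈ Finset.Icc 1 M, Real.cos (k*θ) from by
        linarith [hsplit]]
      exact abs_sub _ _
    calc |∑ k ∈ Finset.Icc (M+1) j, Real.cos (k*θ)|
        ≤ (n:ℝ)/(2*t) + (n:ℝ)/(2*t) := by linarith
      _ = (n:ℝ)/t := by field_simp; ring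

lemma denom_lower (R : ℝ → ℝ) (n : ℕ) (hn : 2 ≤ n) (b : ℝ) (hb : 0 ≤ b)
    (hlow : ∀ k : ℕ, n/2 + 1 ≤ k → k ≤ n → b ≤ R k)
    (hnn : ∀ k : ℕ, 1 ≤ k → k ≤ n → 0 ≤ R k) :
    (n:ℝ)/2 * b ≤ ∑ k ∈ Finset.Icc 1 n, R k := by
  set h := n/2 + 1 with hh
  have hsub : Finset.Icc h n ⊆ Finset.Icc 1 n := by
    apply Finset.Icc_subset_Icc (by omega) le_rfl
  have h1 : ∑ k ∈ Finset.Icc h n, R k ≤ ∑ k ∈ Finset.Icc 1 n, R k := by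
    apply Finset.sum_le_sum_of_subset_of_nonneg hsub
    intro k hk _
    have := Finset.mem_Icc.mp hk
    exact hnn k this.1 this.2
  have h2 : (Finset.Icc h n).card • b ≤ ∑ k ∈ Finset.Icc h n, R k := by
    apply Finset.card_nsmul_le_sum
    intro k hk
    have := Finset.mem_Icc.mp hk
    exact hlow k this.1 this.2
  have hcard : (Finset.Icc h n).card = n + 1 - h := Nat.card_Icc h n
  have hge : (n:ℝ)/2 ≤ ((n + 1 - h : ℕ) : ℝ) := by
    have : n ≤ 2 * (n + 1 - h) := by omega
    have := (Nat.cast_le (α := ℝ)).mpr this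
    push_cast at this
    linarith
  calc (n:ℝ)/2 * b ≤ ((n + 1 - h : ℕ) : ℝ) * b := mul_le_mul_of_nonneg_right hge hb
    _ = (Finset.Icc h n).card • b := by rw [hcard, nsmul_eq_mul]
    _ ≤ ∑ k ∈ Finset.Icc h n, R k := h2
    _ ≤ ∑ k ∈ Finset.Icc 1 n, R k := h1

lemma mono_branch (R : ℝ → ℝ) (A X2 Cd : ℝ)
    (hR0 : ∀ x : ℝ, 0 < x → 0 ≤ R x)
    (hmono : MonotoneOn R (Set.Ioi A))
    (hX2a : A + 1 ≤ X2) (hX21 : 1 ≤ X2)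
    (hpos : ∀ x, X2 ≤ x → 0 < R x)
    (hCd : 0 < Cd)
    (hdoub : ∀ x, X2 ≤ x → R (2*x) ≤ Cd * R x) :
    ∃ C K : ℝ, 0 ≤ C ∧ 1 ≤ K ∧ ∀ (n:ℕ) (t:ℝ), K ≤ t → t ≤ (n:ℝ)/2 →
      (∑ k ∈ Finset.Icc 1 n, R k * Real.cos (2*π*k*t/n)) / (∑ k ∈ Finset.Icc 1 n, R k)
        ≤ C * t^(-(1:ℝ)) := by
  have hA1 : 0 < A + 1 ∨ True := Or.inr trivial
  set K0 : ℕ := ⌈X2⌉₊ + 1 with hK0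
  have hK0X2 : X2 ≤ (K0:ℝ) := by
    have := Nat.le_ceil X2
    rw [hK0]; push_cast
    linarith
  have hK0pos : 0 < R K0 := hpos _ hK0X2
  have hK01 : 1 ≤ K0 := by omega
  set C0 : ℝ := ∑ k ∈ Finset.Icc 1 K0, R k with hC0
  have hC0nn : 0 ≤ C0 := Finset.sum_nonneg fun k hk => by
    have := (Finset.mem_Icc.mp hk).1
    exact hR0 _ (by exact_mod_cast Nat.pos_of_ne_zero (by omega))
  refine ⟨C0 / R K0 + 4*Cd, (K0:ℝ) + 2, by positivity, by
    have : (0:ℝ) ≤ K0 := Nat.cast_nonneg _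
    linarith, ?_⟩
  intro n t hK ht2
  have ht1 : (1:ℝ) ≤ t := by
    have : (0:ℝ) ≤ K0 := Nat.cast_nonneg _
    linarith
  have ht0 : (0:ℝ) < t := by linarith
  have hn2t : 2*t ≤ (n:ℝ) := by linarith
  have hn0 : (0:ℝ) < n := by linarith
  have hnK0 : (K0:ℝ) + 2 ≤ (n:ℝ)/2 := le_trans hK ht2
  have hK0n : K0 < n := by
    have : (K0:ℝ) < n := by linarith
    exact_mod_cast this
  have hn2 : 2 ≤ n := by
    have : (2:ℝ) ≤ (n:ℝ) := by linarith
    exact_mod_cast this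
  set θ : ℝ := 2*π*t/n with hθ
  -- rewrite the cosine arguments
  have hsum_eq : ∑ k ∈ Finset.Icc 1 n, R k * Real.cos (2*π*k*t/n)
      = ∑ k ∈ Finset.Icc 1 n, R k * Real.cos (k*θ) := by
    apply Finset.sum_congr rfl
    intro k _
    rw [show 2*π*(k:ℝ)*t/n = (k:ℝ)*θ by rw [hθ]; ring]
  -- split the numerator
  have hsplit : ∑ k ∈ Finset.Icc 1 n, R k * Real.cos (k*θ)
      = (∑ k ∈ Finset.Icc 1 K0, R k * Real.cos (k*θ))
        + ∑ k ∈ Finset.Icc (K0+1) n, R k * Real.cos (k*θ) := by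
    rw [show Finset.Icc 1 K0 = Finset.Ioc 0 K0 from by rw [← Finset.Icc_add_one_left_eq_Ioc, zero_add],
        show Finset.Icc (K0+1) n = Finset.Ioc K0 n from by rw [← Finset.Icc_add_one_left_eq_Ioc],
        show Finset.Icc 1 n = Finset.Ioc 0 n from by rw [← Finset.Icc_add_one_left_eq_Ioc, zero_add]]
    exact (Finset.sum_Ioc_consecutive _ (by omega) (by omega)).symm
  have hpart1 : ∑ k ∈ Finset.Icc 1 K0, R k * Real.cos (k*θ) ≤ C0 := by
    rw [hC0]
    apply Finset.sum_le_sum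
    intro k hk
    have hk1 := (Finset.mem_Icc.mp hk).1
    have hRk : 0 ≤ R k := hR0 _ (by exact_mod_cast Nat.pos_of_ne_zero (by omega))
    calc R k * Real.cos (k*θ) ≤ R k * 1 :=
          mul_le_mul_of_nonneg_left (Real.cos_le_one _) hRk
      _ = R k := mul_one _
  have hD := partial_cos_bound n t ht1 ht2 K0
  have hpos' : ∀ k : ℕ, K0+1 ≤ k → 0 ≤ R k := fun k hk =>
    hR0 _ (by exact_mod_cast Nat.pos_of_ne_zero (by omega))
  have hmemA : ∀ k : ℕ, K0 ≤ k → (k:ℝ) ∈ Set.Ioi A := by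
    intro k hk
    have : (K0:ℝ) ≤ (k:ℝ) := by exact_mod_cast hk
    exact Set.mem_Ioi.mpr (by linarith)
  have hmono' : ∀ k : ℕ, K0+1 ≤ k → k < n → R k ≤ R (↑(k+1)) := by
    intro k hk _
    have h1 : (k:ℝ) ∈ Set.Ioi A := hmemA k (by omega)
    have h2 : ((k+1:ℕ):ℝ) ∈ Set.Ioi A := hmemA (k+1) (by omega)
    exact hmono h1 h2 (by push_cast; linarith)
  have htail : |∑ k ∈ Finset.Icc (K0+1) n, R k * Real.cos (k*θ)|
      ≤ 2 * R n * ((n:ℝ)/t) :=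
    tail_mono R θ ((n:ℝ)/t) K0 n hK0n hpos' hmono' hD
  -- denominator
  set h : ℕ := n/2 + 1 with hh
  have h2h : n ≤ 2*h := by omega
  have hhn2 : (n:ℝ)/2 ≤ (h:ℝ) := by
    have hc : ((n:ℕ):ℝ) ≤ ((2*h:ℕ):ℝ) := Nat.cast_le.mpr h2h
    rw [Nat.cast_mul, Nat.cast_ofNat] at hc
    linarith
  have hhX2 : X2 ≤ (h:ℝ) := by linarith
  have hhA : (h:ℝ) ∈ Set.Ioi A := Set.mem_Ioi.mpr (by linarith)
  have hRh : 0 < R h := hpos _ hhX2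
  have hnA : (n:ℝ) ∈ Set.Ioi A := Set.mem_Ioi.mpr (by linarith)
  have hσ : (n:ℝ)/2 * R h ≤ ∑ k ∈ Finset.Icc 1 n, R k := by
    apply denom_lower R n hn2 (R h) (le_of_lt hRh)
    · intro k hk1 hk2
      have hkh : (h:ℝ) ≤ (k:ℝ) := by exact_mod_cast hk1
      exact hmono hhA (Set.mem_Ioi.mpr (by linarith)) hkh
    · intro k hk1 _
      exact hR0 _ (by exact_mod_cast Nat.pos_of_ne_zero (by omega))
  -- R n ≤ Cd * R h
  have hRnCd : R n ≤ Cd * R h := by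
    have h1 : R n ≤ R ((2*h : ℕ)) := by
      apply hmono hnA
      · apply Set.mem_Ioi.mpr
        have : (n:ℝ) ≤ ((2*h:ℕ):ℝ) := by exact_mod_cast h2h
        linarith
      · exact_mod_cast h2h
    have h2 : R ((2*h : ℕ)) = R (2*(h:ℝ)) := by push_cast; ring_nf
    have h3 := hdoub (h:ℝ) hhX2
    rw [h2] at h1
    linarith
  have hRK0h : R K0 ≤ R h := by
    apply hmono (hmemA K0 le_rfl) hhA
    linarith
  -- combine
  have hRn0 : 0 ≤ R n := hR0 _ hn0
  have hNum : ∑ k ∈ Finset.Icc 1 n, R k * Real.cos (2*π*k*t/n)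
      ≤ C0 + 2 * R n * ((n:ℝ)/t) := by
    rw [hsum_eq, hsplit]
    have := le_abs_self (∑ k ∈ Finset.Icc (K0+1) n, R k * Real.cos (k*θ))
    linarith
  have hLpos : 0 < (n:ℝ)/2 * R h := by positivity
  have hUnn : 0 ≤ C0 + 2 * R n * ((n:ℝ)/t) := by positivity
  have hdiv : (∑ k ∈ Finset.Icc 1 n, R k * Real.cos (2*π*k*t/n)) / (∑ k ∈ Finset.Icc 1 n, R k)
      ≤ (C0 + 2 * R n * ((n:ℝ)/t)) / ((n:ℝ)/2 * R h) := by
    apply div_le_div₀ hUnn hNum hLpos hσ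
  have hrw : t^(-(1:ℝ)) = t⁻¹ := Real.rpow_neg_one t
  have hfinal : (C0 + 2 * R n * ((n:ℝ)/t)) / ((n:ℝ)/2 * R h)
      ≤ (C0 / R K0 + 4*Cd) * t⁻¹ := by
    have e1 : (C0 + 2 * R n * ((n:ℝ)/t)) / ((n:ℝ)/2 * R h)
        = 2*C0/((n:ℝ)*R h) + 4*R n/(t*R h) := by
      field_simp
      ring
    rw [e1]
    have hprod : 2*t*(R K0) ≤ (n:ℝ)*R h :=
      mul_le_mul hn2t hRK0h (le_of_lt hK0pos) (le_of_lt hn0)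
    have e2 : 2*C0/((n:ℝ)*R h) ≤ C0/(R K0 * t) := by
      rw [div_le_div_iff₀ (by positivity) (by positivity)]
      nlinarith
    have e3 : 4*R n/(t*R h) ≤ 4*Cd/t := by
      rw [div_le_div_iff₀ (by positivity) (by positivity)]
      nlinarith
    have e4 : C0/(R K0 * t) = (C0/R K0) * t⁻¹ := by
      field_simp
    have e5 : 4*Cd/t = 4*Cd*t⁻¹ := by field_simp
    rw [e4] at e2
    rw [e5] at e3
    calc 2*C0/((n:ℝ)*R h) + 4*R n/(t*R h) ≤ (C0/R K0)*t⁻¹ + 4*Cd*t⁻¹ := add_le_add e2 e3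
      _ = (C0 / R K0 + 4*Cd) * t⁻¹ := by ring
  rw [hrw]
  exact le_trans hdiv hfinal

lemma anti_branch (R : ℝ → ℝ) (A X1 β : ℝ)
    (hR0 : ∀ x : ℝ, 0 < x → 0 ≤ R x)
    (hanti : AntitoneOn R (Set.Ioi A))
    (hX1a : A + 1 ≤ X1) (hX11 : 1 ≤ X1)
    (hpos : ∀ x, X1 ≤ x → 0 < R x)
    (hβ0 : 0 < β) (hβ1 : β < 1)
    (hdoub : ∀ x, X1 ≤ x → 2^(-β) * R x ≤ R (2*x)) :
    ∃ C K : ℝ, 0 ≤ C ∧ 1 ≤ K ∧ ∀ (n:ℕ) (t:ℝ), K ≤ t → t ≤ (n:ℝ)/2 →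
      (∑ k ∈ Finset.Icc 1 n, R k * Real.cos (2*π*k*t/n)) / (∑ k ∈ Finset.Icc 1 n, R k)
        ≤ C * t^(-(1-β)) := by
  have hpotter := potter_anti R A X1 β (le_of_lt hβ0) hanti (by linarith) (by linarith) hdoub
      (fun z hz => le_of_lt (hpos z hz))
  set K0 : ℕ := ⌈X1⌉₊ + 1 with hK0def
  have hK0X1 : X1 ≤ (K0:ℝ) := by
    have := Nat.le_ceil X1
    rw [hK0def]; push_cast
    linarith
  have hK01 : 1 ≤ K0 := by omega
  set C0 : ℝ := ∑ k ∈ Finset.Icc 1 K0, R k with hC0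
  have hC0nn : 0 ≤ C0 := Finset.sum_nonneg fun k hk => by
    have := (Finset.mem_Icc.mp hk).1
    exact hR0 _ (by exact_mod_cast Nat.pos_of_ne_zero (by omega))
  have h1β : (0:ℝ) < 1 - β := by linarith
  set cβ : ℝ := 1 + 1/(1-β) with hcβ
  have hcβ0 : 0 < cβ := by positivity
  set C1 : ℝ := 2^β * cβ + 2 with hC1
  have hC10 : 0 < C1 := by positivity
  set cK : ℝ := (K0:ℝ) + 1 with hcK
  have hcK1 : 1 ≤ cK := by
    have : (0:ℝ) ≤ K0 := Nat.cast_nonneg _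
    linarith
  set C2 : ℝ := 2^β * cK^(1-β) with hC2
  have hC20 : 0 < C2 := by positivity
  have hRX1 : 0 < R X1 := hpos X1 le_rfl
  set c3 : ℝ := (X1/2)^β * R X1 with hc3
  have hc30 : 0 < c3 := by positivity
  refine ⟨2*C0/c3 + 2*C1*C2, (K0:ℝ)+2, by positivity, by
    have : (0:ℝ) ≤ K0 := Nat.cast_nonneg _
    linarith, ?_⟩
  intro n t hK ht2
  have ht1 : (1:ℝ) ≤ t := by
    have : (0:ℝ) ≤ K0 := Nat.cast_nonneg _
    linarith
  have ht0 : (0:ℝ) < t := by linarith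
  have hn2t : 2*t ≤ (n:ℝ) := by linarith
  have hn0 : (0:ℝ) < n := by linarith
  have hX1t : X1 ≤ t := by linarith
  have hK0n : K0 < n := by
    have : (K0:ℝ) < n := by linarith
    exact_mod_cast this
  have hn2 : 2 ≤ n := by
    have : (2:ℝ) ≤ (n:ℝ) := by linarith
    exact_mod_cast this
  -- the split point
  set m : ℕ := ⌊(n:ℝ)/t⌋₊ with hmdef
  have hnt2 : (2:ℝ) ≤ (n:ℝ)/t := by
    rw [le_div_iff₀ ht0]; linarith
  have hm2 : 2 ≤ m := by
    apply Nat.le_floor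
    exact_mod_cast hnt2
  have hmle : (m:ℝ) ≤ (n:ℝ)/t := Nat.floor_le (by positivity)
  have hmlt : (n:ℝ)/t < (m:ℝ)+1 := Nat.lt_floor_add_one _
  set M : ℕ := max m K0 with hMdef
  have hMK0 : K0 ≤ M := le_max_right _ _
  have hMm : m ≤ M := le_max_left _ _
  have hMX1 : X1 ≤ (M:ℝ) := by
    have : (K0:ℝ) ≤ (M:ℝ) := by exact_mod_cast hMK0
    linarith
  have hM1 : 1 ≤ M := le_trans hK01 hMK0
  have hM0 : (0:ℝ) < M := by
    have : (1:ℝ) ≤ (M:ℝ) := by exact_mod_cast hM1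
    linarith
  have hMn : M < n := by
    have h1 : (m:ℝ) < n := by
      have : (n:ℝ)/t ≤ (n:ℝ)/2 := by
        apply div_le_div_of_nonneg_left (le_of_lt hn0) (by norm_num) (by linarith)
      have : (m:ℝ) ≤ (n:ℝ)/2 := le_trans hmle this
      linarith
    have hm' : m < n := by exact_mod_cast h1
    omega
  have hMltn : (M:ℝ) ≤ (n:ℝ) := by
    have : M ≤ n := le_of_lt hMn
    exact_mod_cast this
  have hMcap : (M:ℝ) ≤ cK * ((n:ℝ)/t) := by
    have hnt0 : (0:ℝ) ≤ (n:ℝ)/t := by positivity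
    have hMc : (M:ℝ) = max (m:ℝ) (K0:ℝ) := by
      rw [hMdef]; simp [Nat.cast_max]
    rw [hMc]
    apply max_le
    · calc (m:ℝ) ≤ (n:ℝ)/t := hmle
        _ ≤ cK * ((n:ℝ)/t) := le_mul_of_one_le_left hnt0 hcK1
    · calc (K0:ℝ) ≤ cK * 2 := by rw [hcK]; linarith
        _ ≤ cK * ((n:ℝ)/t) := by
            apply mul_le_mul_of_nonneg_left hnt2 (by linarith)
  have hRM : 0 < R M := hpos _ hMX1
  have hRn : 0 < R n := hpos _ (by linarith : X1 ≤ (n:ℝ))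
  set θ : ℝ := 2*π*t/n with hθ
  have hsum_eq : ∑ k ∈ Finset.Icc 1 n, R k * Real.cos (2*π*k*t/n)
      = ∑ k ∈ Finset.Icc 1 n, R k * Real.cos (k*θ) := by
    apply Finset.sum_congr rfl
    intro k _
    rw [show 2*π*(k:ℝ)*t/n = (k:ℝ)*θ by rw [hθ]; ring]
  have hsplit : ∑ k ∈ Finset.Icc 1 n, R k * Real.cos (k*θ)
      = (∑ k ∈ Finset.Icc 1 M, R k * Real.cos (k*θ))
        + ∑ k ∈ Finset.Icc (M+1) n, R k * Real.cos (k*θ) := by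
    rw [show Finset.Icc 1 M = Finset.Ioc 0 M from by rw [← Finset.Icc_add_one_left_eq_Ioc, zero_add],
        show Finset.Icc (M+1) n = Finset.Ioc M n from by rw [← Finset.Icc_add_one_left_eq_Ioc],
        show Finset.Icc 1 n = Finset.Ioc 0 n from by rw [← Finset.Icc_add_one_left_eq_Ioc, zero_add]]
    exact (Finset.sum_Ioc_consecutive _ (by omega) (by omega)).symm
  -- part 1 : the head
  have hpart1a : ∑ k ∈ Finset.Icc 1 M, R k * Real.cos (k*θ)
      ≤ ∑ k ∈ Finset.Icc 1 M, R k := by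
    apply Finset.sum_le_sum
    intro k hk
    have hk1 := (Finset.mem_Icc.mp hk).1
    have hRk : 0 ≤ R k := hR0 _ (by exact_mod_cast Nat.pos_of_ne_zero (by omega))
    calc R k * Real.cos (k*θ) ≤ R k * 1 :=
          mul_le_mul_of_nonneg_left (Real.cos_le_one _) hRk
      _ = R k := mul_one _
  have hheadsplit : ∑ k ∈ Finset.Icc 1 M, R k
      = C0 + ∑ k ∈ Finset.Icc (K0+1) M, R k := by
    rw [hC0]
    rw [show Finset.Icc 1 K0 = Finset.Ioc 0 K0 from by rw [← Finset.Icc_add_one_left_eq_Ioc, zero_add],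
        show Finset.Icc (K0+1) M = Finset.Ioc K0 M from by rw [← Finset.Icc_add_one_left_eq_Ioc],
        show Finset.Icc 1 M = Finset.Ioc 0 M from by rw [← Finset.Icc_add_one_left_eq_Ioc, zero_add]]
    exact (Finset.sum_Ioc_consecutive _ (by omega) (by omega)).symm
  have h2M0 : (0:ℝ) < 2*(M:ℝ) := by linarith
  have hterm : ∀ k : ℕ, k ∈ Finset.Icc (K0+1) M →
      R k ≤ ((k:ℝ))^(-β) * ((2*(M:ℝ))^β * R M) := by
    intro k hk
    obtain ⟨hk1, hk2⟩ := Finset.mem_Icc.mp hk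
    have hkX1 : X1 ≤ (k:ℝ) := by
      have : (K0:ℝ) ≤ (k:ℝ) := by exact_mod_cast (by omega : K0 ≤ k)
      linarith
    have hkM : (k:ℝ) ≤ (M:ℝ) := by exact_mod_cast hk2
    have hk0 : (0:ℝ) < (k:ℝ) := by linarith
    have hp := hpotter (k:ℝ) (M:ℝ) hkX1 hkM
    have hb0 : (0:ℝ) < ((k:ℝ)/(2*(M:ℝ)))^β := Real.rpow_pos_of_pos (by positivity) _
    have hRk : R (k:ℝ) ≤ R M / ((k:ℝ)/(2*(M:ℝ)))^β := by
      rw [le_div_iff₀ hb0]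
      linarith [hp]
    have hrw : R M / ((k:ℝ)/(2*(M:ℝ)))^β = ((k:ℝ))^(-β) * ((2*(M:ℝ))^β * R M) := by
      rw [Real.div_rpow (le_of_lt hk0) (le_of_lt h2M0)]
      rw [Real.rpow_neg (le_of_lt hk0)]
      field_simp
    rw [hrw] at hRk
    exact hRk
  have hsumpow := sum_rpow_le β hβ0 hβ1 M hM1
  have hM1β : (1:ℝ) ≤ (M:ℝ)^(1-β) := by
    calc (1:ℝ) = (1:ℝ)^(1-β) := (Real.one_rpow _).symm
      _ ≤ (M:ℝ)^(1-β) := Real.rpow_le_rpow (by norm_num)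
          (by exact_mod_cast hM1) (by linarith)
  have hhead2 : ∑ k ∈ Finset.Icc (K0+1) M, R k ≤ 2^β * cβ * ((M:ℝ) * R M) := by
    have step1 : ∑ k ∈ Finset.Icc (K0+1) M, R k
        ≤ ∑ k ∈ Finset.Icc (K0+1) M, ((k:ℝ))^(-β) * ((2*(M:ℝ))^β * R M) :=
      Finset.sum_le_sum hterm
    have step2 : ∑ k ∈ Finset.Icc (K0+1) M, ((k:ℝ))^(-β) * ((2*(M:ℝ))^β * R M)
        ≤ ∑ k ∈ Finset.Icc 1 M, ((k:ℝ))^(-β) * ((2*(M:ℝ))^β * R M) := by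
      apply Finset.sum_le_sum_of_subset_of_nonneg
      · exact Finset.Icc_subset_Icc (by omega) le_rfl
      · intro k _ _
        have : (0:ℝ) ≤ ((k:ℝ))^(-β) := Real.rpow_nonneg (Nat.cast_nonneg _) _
        positivity
    have step3 : ∑ k ∈ Finset.Icc 1 M, ((k:ℝ))^(-β) * ((2*(M:ℝ))^β * R M)
        = (∑ k ∈ Finset.Icc 1 M, ((k:ℝ))^(-β)) * ((2*(M:ℝ))^β * R M) := by
      rw [← Finset.sum_mul]
    have step4 : (∑ k ∈ Finset.Icc 1 M, ((k:ℝ))^(-β)) * ((2*(M:ℝ))^β * R M)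
        ≤ (cβ * (M:ℝ)^(1-β)) * ((2*(M:ℝ))^β * R M) := by
      apply mul_le_mul_of_nonneg_right
      · calc (∑ k ∈ Finset.Icc 1 M, ((k:ℝ))^(-β)) ≤ 1 + (M:ℝ)^(1-β)/(1-β) := hsumpow
          _ ≤ (M:ℝ)^(1-β) + (M:ℝ)^(1-β)/(1-β) := by linarith [hM1β]
          _ = cβ * (M:ℝ)^(1-β) := by rw [hcβ]; field_simp
      · positivity
    have step5 : (cβ * (M:ℝ)^(1-β)) * ((2*(M:ℝ))^β * R M) = 2^β * cβ * ((M:ℝ) * R M) := by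
      rw [Real.mul_rpow (by norm_num : (0:ℝ) ≤ 2) (le_of_lt hM0)]
      have : (M:ℝ)^(1-β) * (M:ℝ)^β = (M:ℝ) := by
        rw [← Real.rpow_add hM0]
        norm_num
      calc (cβ * (M:ℝ)^(1-β)) * ((2:ℝ)^β * (M:ℝ)^β * R M)
          = 2^β * cβ * (((M:ℝ)^(1-β) * (M:ℝ)^β) * R M) := by ring
        _ = 2^β * cβ * ((M:ℝ) * R M) := by rw [this]
    calc ∑ k ∈ Finset.Icc (K0+1) M, R k
        ≤ ∑ k ∈ Finset.Icc 1 M, ((k:ℝ))^(-β) * ((2*(M:ℝ))^β * R M) := le_trans step1 step2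
      _ = (∑ k ∈ Finset.Icc 1 M, ((k:ℝ))^(-β)) * ((2*(M:ℝ))^β * R M) := step3
      _ ≤ (cβ * (M:ℝ)^(1-β)) * ((2*(M:ℝ))^β * R M) := step4
      _ = 2^β * cβ * ((M:ℝ) * R M) := step5
  -- the tail
  have hD := partial_cos_bound n t ht1 ht2 M
  have hpos' : ∀ k : ℕ, M+1 ≤ k → 0 ≤ R k := fun k hk =>
    hR0 _ (by exact_mod_cast Nat.pos_of_ne_zero (by omega))
  have hmemA : ∀ k : ℕ, K0 ≤ k → (k:ℝ) ∈ Set.Ioi A := by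
    intro k hk
    have : (K0:ℝ) ≤ (k:ℝ) := by exact_mod_cast hk
    exact Set.mem_Ioi.mpr (by linarith)
  have hanti' : ∀ k : ℕ, M+1 ≤ k → k < n → R (↑(k+1)) ≤ R k := by
    intro k hk _
    exact hanti (hmemA k (by omega)) (hmemA (k+1) (by omega)) (by push_cast; linarith)
  have htail : |∑ k ∈ Finset.Icc (M+1) n, R k * Real.cos (k*θ)|
      ≤ R (↑(M+1)) * ((n:ℝ)/t) :=
    tail_anti R θ ((n:ℝ)/t) M n hMn hpos' hanti' hD
  have htail2 : R (↑(M+1)) * ((n:ℝ)/t) ≤ R M * (2*(M:ℝ)) := by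
    apply mul_le_mul
    · apply hanti (hmemA M hMK0) (hmemA (M+1) (by omega))
      push_cast; linarith
    · have : (M:ℝ)+1 ≤ 2*(M:ℝ) := by
        have : (1:ℝ) ≤ (M:ℝ) := by exact_mod_cast hM1
        linarith
      have hMm1 : (m:ℝ)+1 ≤ (M:ℝ)+1 := by
        have : (m:ℝ) ≤ (M:ℝ) := by exact_mod_cast hMm
        linarith
      linarith
    · positivity
    · exact le_of_lt hRM
  -- numerator bound
  have hNum : ∑ k ∈ Finset.Icc 1 n, R k * Real.cos (2*π*k*t/n)
      ≤ C0 + C1 * ((M:ℝ) * R M) := by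
    rw [hsum_eq, hsplit]
    have htail3 : ∑ k ∈ Finset.Icc (M+1) n, R k * Real.cos (k*θ) ≤ 2 * ((M:ℝ) * R M) := by
      have h1 := le_abs_self (∑ k ∈ Finset.Icc (M+1) n, R k * Real.cos (k*θ))
      have h2 : R M * (2*(M:ℝ)) = 2 * ((M:ℝ) * R M) := by ring
      linarith [htail, htail2]
    have expand : C1 * ((M:ℝ) * R M)
        = 2^β*cβ*((M:ℝ)*R M) + 2*((M:ℝ)*R M) := by rw [hC1]; ring
    linarith [hpart1a, hheadsplit, hhead2, htail3]
  -- denominator bound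
  have hσ : (n:ℝ)/2 * R n ≤ ∑ k ∈ Finset.Icc 1 n, R k := by
    apply denom_lower R n hn2 (R n) (le_of_lt hRn)
    · intro k hk1 hk2
      have hkhalf : (n:ℝ)/2 ≤ (k:ℝ) := by
        have h2k : n ≤ 2*k := by omega
        have := (Nat.cast_le (α := ℝ)).mpr h2k
        rw [Nat.cast_mul, Nat.cast_ofNat] at this
        linarith
      apply hanti (Set.mem_Ioi.mpr (by linarith : A < (k:ℝ)))
        (Set.mem_Ioi.mpr (by linarith : A < (n:ℝ)))
      exact_mod_cast hk2
    · intro k hk1 _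
      exact hR0 _ (by exact_mod_cast Nat.pos_of_ne_zero (by omega))
  -- key power estimates
  have htpow0 : (0:ℝ) < t^(1-β) := Real.rpow_pos_of_pos ht0 _
  have hnegrw : t^(-(1-β)) = (t^(1-β))⁻¹ := Real.rpow_neg (le_of_lt ht0) _
  have hP : (M:ℝ) * R M ≤ C2 * t^(-(1-β)) * ((n:ℝ) * R n) := by
    have hp := hpotter (M:ℝ) (n:ℝ) hMX1 hMltn
    have hb0 : (0:ℝ) < ((M:ℝ)/(2*(n:ℝ)))^β := Real.rpow_pos_of_pos (by positivity) _
    have hRM' : R M ≤ ((2*(n:ℝ))^β * ((M:ℝ))^(-β)) * R n := by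
      have h1 : R M ≤ R n / ((M:ℝ)/(2*(n:ℝ)))^β := by
        rw [le_div_iff₀ hb0]; linarith [hp]
      have h2 : R n / ((M:ℝ)/(2*(n:ℝ)))^β = ((2*(n:ℝ))^β * ((M:ℝ))^(-β)) * R n := by
        rw [Real.div_rpow (le_of_lt hM0) (by positivity)]
        rw [Real.rpow_neg (le_of_lt hM0)]
        field_simp
      rw [h2] at h1
      exact h1
    have hb1 : (M:ℝ) * R M ≤ (M:ℝ)^(1-β) * ((2*(n:ℝ))^β * R n) := by
      have := mul_le_mul_of_nonneg_left hRM' (le_of_lt hM0)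
      calc (M:ℝ) * R M ≤ (M:ℝ) * (((2*(n:ℝ))^β * ((M:ℝ))^(-β)) * R n) := this
        _ = ((M:ℝ) * ((M:ℝ))^(-β)) * ((2*(n:ℝ))^β * R n) := by ring
        _ = (M:ℝ)^(1-β) * ((2*(n:ℝ))^β * R n) := by
            congr 1
            rw [show ((M:ℝ)) * ((M:ℝ))^(-β) = (M:ℝ)^(1:ℝ) * ((M:ℝ))^(-β) from by
              rw [Real.rpow_one]]
            rw [← Real.rpow_add hM0]
            congr 1 <;> ring
    have hb2 : (M:ℝ)^(1-β) ≤ cK^(1-β) * ((n:ℝ)^(1-β) * (t^(1-β))⁻¹) := by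
      calc (M:ℝ)^(1-β) ≤ (cK * ((n:ℝ)/t))^(1-β) :=
            Real.rpow_le_rpow (le_of_lt hM0) hMcap (by linarith)
        _ = cK^(1-β) * ((n:ℝ)/t)^(1-β) := Real.mul_rpow (by linarith) (by positivity)
        _ = cK^(1-β) * ((n:ℝ)^(1-β) * (t^(1-β))⁻¹) := by
            rw [Real.div_rpow (le_of_lt hn0) (le_of_lt ht0)]
            rw [div_eq_mul_inv]
    have hn1β : (n:ℝ)^(1-β) * (n:ℝ)^β = (n:ℝ) := by
      rw [← Real.rpow_add hn0]; norm_num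
    calc (M:ℝ) * R M ≤ (M:ℝ)^(1-β) * ((2*(n:ℝ))^β * R n) := hb1
      _ ≤ (cK^(1-β) * ((n:ℝ)^(1-β) * (t^(1-β))⁻¹)) * ((2*(n:ℝ))^β * R n) := by
          apply mul_le_mul_of_nonneg_right hb2
          positivity
      _ = C2 * t^(-(1-β)) * ((n:ℝ) * R n) := by
          rw [hnegrw, hC2, Real.mul_rpow (by norm_num : (0:ℝ) ≤ 2) (le_of_lt hn0)]
          calc (cK^(1-β) * ((n:ℝ)^(1-β) * (t^(1-β))⁻¹)) * ((2:ℝ)^β * (n:ℝ)^β * R n)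
              = (2^β * cK^(1-β)) * (t^(1-β))⁻¹ * (((n:ℝ)^(1-β) * (n:ℝ)^β) * R n) := by ring
            _ = (2^β * cK^(1-β)) * (t^(1-β))⁻¹ * ((n:ℝ) * R n) := by rw [hn1β]
  have hS : c3 * (n:ℝ)^(1-β) ≤ (n:ℝ) * R n := by
    have hp := hpotter X1 (n:ℝ) le_rfl (by linarith)
    have h2 : (X1/(2*(n:ℝ)))^β = (X1/2)^β * ((n:ℝ))^(-β) := by
      rw [show X1/(2*(n:ℝ)) = (X1/2) * ((n:ℝ))⁻¹ from by field_simp]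
      rw [Real.mul_rpow (by positivity) (by positivity)]
      rw [← Real.rpow_neg_one (n:ℝ), ← Real.rpow_mul (le_of_lt hn0)]  -- (n⁻¹)^β = n^(-β)
      norm_num
    have h3 : c3 * ((n:ℝ))^(-β) ≤ R n := by
      rw [hc3]
      calc (X1/2)^β * R X1 * ((n:ℝ))^(-β) = (X1/(2*(n:ℝ)))^β * R X1 := by rw [h2]; ring
        _ ≤ R n := hp
    have h4 : (n:ℝ) * (c3 * ((n:ℝ))^(-β)) ≤ (n:ℝ) * R n :=
      mul_le_mul_of_nonneg_left h3 (le_of_lt hn0)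
    calc c3 * (n:ℝ)^(1-β) = (n:ℝ) * (c3 * ((n:ℝ))^(-β)) := by
          rw [show (n:ℝ)^(1-β) = (n:ℝ)^(1:ℝ) * ((n:ℝ))^(-β) from by
            rw [← Real.rpow_add hn0]; congr 1 <;> ring]
          rw [Real.rpow_one]
          ring
      _ ≤ (n:ℝ) * R n := h4
  have htn : t^(1-β) ≤ (n:ℝ)^(1-β) :=
    Real.rpow_le_rpow (le_of_lt ht0) (by linarith) (by linarith)
  -- final combination
  have hLpos : (0:ℝ) < (n:ℝ)/2 * R n := by positivity
  have hUnn : (0:ℝ) ≤ C0 + C1 * ((M:ℝ) * R M) := by positivity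
  have hdiv : (∑ k ∈ Finset.Icc 1 n, R k * Real.cos (2*π*k*t/n)) / (∑ k ∈ Finset.Icc 1 n, R k)
      ≤ (C0 + C1 * ((M:ℝ) * R M)) / ((n:ℝ)/2 * R n) :=
    div_le_div₀ hUnn hNum hLpos hσ
  have hSpos : (0:ℝ) < (n:ℝ) * R n := by positivity
  have e1 : (C0 + C1 * ((M:ℝ) * R M)) / ((n:ℝ)/2 * R n)
      = 2*C0/((n:ℝ) * R n) + 2*C1*(((M:ℝ) * R M)/((n:ℝ) * R n)) := by
    field_simp
  have e2 : 2*C0/((n:ℝ) * R n) ≤ (2*C0/c3) * t^(-(1-β)) := by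
    rw [hnegrw]
    calc 2*C0/((n:ℝ) * R n) ≤ 2*C0/(c3 * (n:ℝ)^(1-β)) := by
          apply div_le_div_of_nonneg_left (by linarith) (by positivity) hS
      _ ≤ 2*C0/(c3 * t^(1-β)) := by
          apply div_le_div_of_nonneg_left (by linarith) (by positivity)
          apply mul_le_mul_of_nonneg_left htn (le_of_lt hc30)
      _ = (2*C0/c3) * (t^(1-β))⁻¹ := by field_simp
  have e3 : 2*C1*(((M:ℝ) * R M)/((n:ℝ) * R n)) ≤ 2*C1*C2 * t^(-(1-β)) := by
    have hfrac : ((M:ℝ) * R M)/((n:ℝ) * R n) ≤ C2 * t^(-(1-β)) := by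
      rw [div_le_iff₀ hSpos]
      exact hP
    calc 2*C1*(((M:ℝ) * R M)/((n:ℝ) * R n)) ≤ 2*C1*(C2 * t^(-(1-β))) :=
          mul_le_mul_of_nonneg_left hfrac (by positivity)
      _ = 2*C1*C2 * t^(-(1-β)) := by ring
  calc (∑ k ∈ Finset.Icc 1 n, R k * Real.cos (2*π*k*t/n)) / (∑ k ∈ Finset.Icc 1 n, R k)
      ≤ (C0 + C1 * ((M:ℝ) * R M)) / ((n:ℝ)/2 * R n) := hdiv
    _ = 2*C0/((n:ℝ) * R n) + 2*C1*(((M:ℝ) * R M)/((n:ℝ) * R n)) := e1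
    _ ≤ (2*C0/c3) * t^(-(1-β)) + 2*C1*C2 * t^(-(1-β)) := add_le_add e2 e3
    _ = (2*C0/c3 + 2*C1*C2) * t^(-(1-β)) := by ring

/-- Condition (2) of Seleznjev's theorem for the rescaled `1/f^α`-noise: for every
`ε > 0` there is `T > 0` with `ρ_n(t) log t < ε` for every `n` and `t ∈ [T, n/2]`,
where `ρ_n(t) = σ_n^{-2} Σ_{k=1}^n R(k) cos(2πkt/n)`. -/
theorem covariance_log_decay
    (R : ℝ → ℝ) (hR0 : ∀ x : ℝ, 0 < x → 0 ≤ R x)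
    (α : ℝ) (hα : α < 1)
    (hRV : RegularlyVarying R (-α)) (hRmono : EventuallyMonotone R)
    (ρ : ℕ → ℝ → ℝ)
    (hρ : ∀ (n : ℕ) (t : ℝ), ρ n t =
      (∑ k ∈ Finset.Icc 1 n, R k * Real.cos (2 * π * k * t / n)) /
        (∑ k ∈ Finset.Icc 1 n, R k)) :
    ∀ ε : ℝ, 0 < ε → ∃ T : ℝ, 0 < T ∧ ∀ (n : ℕ) (t : ℝ), T ≤ t → t ≤ (n : ℝ) / 2 →
      ρ n t * Real.log t < ε := by
  intro ε hε
  -- eventual positivity of R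
  have h1 : Filter.Tendsto (fun x => R x / R x) Filter.atTop (nhds 1) := by
    have := hRV 1 one_pos
    simpa using this
  have hhalf : ∀ᶠ x : ℝ in Filter.atTop, (1:ℝ)/2 < R x / R x :=
    h1.eventually (eventually_gt_nhds (by norm_num))
  have hpos_ev : ∀ᶠ x : ℝ in Filter.atTop, 0 < R x := by
    filter_upwards [hhalf, Filter.eventually_ge_atTop (1:ℝ)] with x hx hx1
    rcases eq_or_ne (R x) 0 with h0 | h0
    · rw [h0] at hx; norm_num at hx
    · exact lt_of_le_of_ne (hR0 x (by linarith)) (Ne.symm h0)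
  obtain ⟨X0, hX0⟩ := Filter.eventually_atTop.mp hpos_ev
  -- the doubling limit
  have h2 : Filter.Tendsto (fun x => R (2*x) / R x) Filter.atTop (nhds ((2:ℝ)^(-α))) :=
    hRV 2 two_pos
  obtain ⟨A, hm | hanti⟩ := hRmono
  · -- monotone case
    set Cd : ℝ := (2:ℝ)^(-α) + 1 with hCddef
    have hCd : 0 < Cd := by positivity
    have hev : ∀ᶠ x : ℝ in Filter.atTop, R (2*x) / R x < Cd :=
      h2.eventually (eventually_lt_nhds (by rw [hCddef]; linarith))
    obtain ⟨X2', hX2'⟩ := Filter.eventually_atTop.mp hev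
    set X2 : ℝ := max X2' (max X0 (max 1 (A+1))) with hX2def
    have hposX2 : ∀ x, X2 ≤ x → 0 < R x := fun x hx =>
      hX0 x (le_trans (le_trans (le_max_left _ _) (le_max_right _ _)) hx)
    have hdoub : ∀ x, X2 ≤ x → R (2*x) ≤ Cd * R x := by
      intro x hx
      have h3 := hX2' x (le_trans (le_max_left _ _) hx)
      have h4 := hposX2 x hx
      rw [div_lt_iff₀ h4] at h3
      linarith
    obtain ⟨C, K, hC, hK, hb⟩ := mono_branch R A X2 Cd hR0 hm
      (le_trans (le_trans (le_max_right _ _) (le_max_right _ _)) (le_max_right _ _))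
      (le_trans (le_trans (le_max_left _ _) (le_max_right _ _)) (le_max_right _ _))
      hposX2 hCd hdoub
    apply glue ρ C 1 K hC one_pos hK ε hε
    intro n t ht1 ht2
    rw [hρ n t]
    exact hb n t ht1 ht2
  · -- antitone case
    -- first: 0 ≤ α
    have hα0 : 0 ≤ α := by
      by_contra hneg
      push_neg at hneg
      have hgt1 : (1:ℝ) < (2:ℝ)^(-α) := by
        rw [show (1:ℝ) = (2:ℝ)^(0:ℝ) from (Real.rpow_zero 2).symm]
        exact Real.rpow_lt_rpow_left_iff (by norm_num) |>.mpr (by linarith)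
      have hev : ∀ᶠ x : ℝ in Filter.atTop, 1 < R (2*x) / R x :=
        h2.eventually (eventually_gt_nhds hgt1)
      obtain ⟨x, hx1, hx2⟩ :=
        (hev.and (Filter.eventually_ge_atTop (max X0 (max 1 (A+1))))).exists
      have hx0 : 0 < R x := hX0 x (le_trans (le_max_left _ _) hx2)
      have hxg1 : (1:ℝ) ≤ x := le_trans (le_trans (le_max_left _ _) (le_max_right _ _)) hx2
      have hxA : A < x := by
        have := le_trans (le_trans (le_max_right _ _) (le_max_right _ _)) hx2
        linarith
      have hRlt : R x < R (2*x) := by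
        rw [lt_div_iff₀ hx0] at hx1
        linarith
      have hRle : R (2*x) ≤ R x :=
        hanti (Set.mem_Ioi.mpr hxA) (Set.mem_Ioi.mpr (by linarith)) (by linarith)
      linarith
    set β : ℝ := (1+α)/2 with hβdef
    have hβ0 : 0 < β := by rw [hβdef]; linarith
    have hβ1 : β < 1 := by rw [hβdef]; linarith
    have hαβ : α < β := by rw [hβdef]; linarith
    have hlt : (2:ℝ)^(-β) < (2:ℝ)^(-α) :=
      Real.rpow_lt_rpow_left_iff (by norm_num) |>.mpr (by linarith)
    have hev : ∀ᶠ x : ℝ in Filter.atTop, (2:ℝ)^(-β) < R (2*x) / R x :=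
      h2.eventually (eventually_gt_nhds hlt)
    obtain ⟨X1', hX1'⟩ := Filter.eventually_atTop.mp hev
    set X1 : ℝ := max X1' (max X0 (max 1 (A+1))) with hX1def
    have hposX1 : ∀ x, X1 ≤ x → 0 < R x := fun x hx =>
      hX0 x (le_trans (le_trans (le_max_left _ _) (le_max_right _ _)) hx)
    have hdoub : ∀ x, X1 ≤ x → (2:ℝ)^(-β) * R x ≤ R (2*x) := by
      intro x hx
      have h3 := hX1' x (le_trans (le_max_left _ _) hx)
      have h4 := hposX1 x hx
      rw [lt_div_iff₀ h4] at h3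
      linarith
    obtain ⟨C, K, hC, hK, hb⟩ := anti_branch R A X1 β hR0 hanti
      (le_trans (le_trans (le_max_right _ _) (le_max_right _ _)) (le_max_right _ _))
      (le_trans (le_trans (le_max_left _ _) (le_max_right _ _)) (le_max_right _ _))
      hposX1 hβ0 hβ1 hdoub
    apply glue ρ C (1-β) K hC (by linarith) hK ε hε
    intro n t ht1 ht2
    rw [hρ n t]
    exact hb n t ht1 ht2
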